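/- For a > 1, m, n ∈ ℕ₊, and x, y ≥ 0, the bivariate Szász-Mirakjan type operator applied to the function f(t,s) = t satisfies Ŷ_{m,n,a}(e₁₀; x, y) = x log a / (m (a^{1/m} − 1)). -/
import Mathlib

open Real Filter

/-- One-dimensional Szász–Mirakjan type kernel. -/
noncomputable def szKernel (a : ℝ) (m : ℕ) (x : ℝ) (k : ℕ) : ℝ :=
  a ^ (-x / (a ^ ((m : ℝ)⁻¹) - 1)) * (x * Real.log a) ^ k /
    ((a ^ ((m : ℝ)⁻¹) - 1) ^ k * (k.factorial : ℝ))

/-- Bivariate Szász–Mirakjan type operator. -/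
noncomputable def szBiv (a : ℝ) (m n : ℕ) (f : ℝ → ℝ → ℝ) (x y : ℝ) : ℝ :=
  ∑' k₁ : ℕ, ∑' k₂ : ℕ,
    szKernel a m x k₁ * szKernel a n y k₂ * f ((k₁ : ℝ) / m) ((k₂ : ℝ) / n)

/-- Associated GBS (Generalized Boolean Sum) operator. -/
noncomputable def szGBS (a : ℝ) (m n : ℕ) (f : ℝ → ℝ → ℝ) (x y : ℝ) : ℝ :=
  ∑' k₁ : ℕ, ∑' k₂ : ℕ,
    szKernel a m x k₁ * szKernel a n y k₂ *
      (f x ((k₂ : ℝ) / n) + f ((k₁ : ℝ) / m) y - f ((k₁ : ℝ) / m) ((k₂ : ℝ) / n))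

lemma tsum_exp_aux (w : ℝ) : ∑' k : ℕ, w ^ k / (k.factorial : ℝ) = Real.exp w := by
  rw [Real.exp_eq_exp_ℝ, NormedSpace.exp_eq_tsum_div]

lemma szKernel_eq (a : ℝ) (m : ℕ) (x : ℝ) (k : ℕ) :
    szKernel a m x k = a ^ (-x / (a ^ ((m : ℝ)⁻¹) - 1)) *
      (((x * Real.log a) / (a ^ ((m : ℝ)⁻¹) - 1)) ^ k / (k.factorial : ℝ)) := by
  unfold szKernel
  rw [div_pow, div_div, mul_div_assoc]

lemma szKernel_tsum (a : ℝ) (ha : 0 < a) (m : ℕ) (x : ℝ) :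
    ∑' k : ℕ, szKernel a m x k = 1 := by
  set c := a ^ ((m : ℝ)⁻¹) - 1 with hc
  have h1 : ∀ k, szKernel a m x k =
      a ^ (-x / c) * ((x * Real.log a / c) ^ k / (k.factorial : ℝ)) :=
    szKernel_eq a m x
  rw [tsum_congr h1, tsum_mul_left, tsum_exp_aux]
  rw [Real.rpow_def_of_pos ha, ← Real.exp_add]
  rw [show Real.log a * (-x / c) + x * Real.log a / c = 0 by ring, Real.exp_zero]

lemma tsum_k_pow (w : ℝ) :
    ∑' k : ℕ, (k : ℝ) * w ^ k / (k.factorial : ℝ) = w * Real.exp w := by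
  have hs : Summable (fun k : ℕ => w * (w ^ k / (k.factorial : ℝ))) :=
    (Real.summable_pow_div_factorial w).mul_left w
  have key : ∀ k : ℕ, ((k + 1 : ℕ) : ℝ) * w ^ (k + 1) / ((k + 1).factorial : ℝ)
      = w * (w ^ k / (k.factorial : ℝ)) := by
    intro k
    rw [Nat.factorial_succ]
    push_cast
    have h0 : ((k : ℝ) + 1) ≠ 0 := by positivity
    have h1 : (k.factorial : ℝ) ≠ 0 := by positivity
    field_simp
    ring
  have hf : Summable (fun k : ℕ => (k : ℝ) * w ^ k / (k.factorial : ℝ)) := by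
    exact (summable_nat_add_iff 1).mp (hs.congr fun k => (key k).symm)
  rw [Summable.tsum_eq_zero_add hf]
  simp only [key]
  rw [tsum_mul_left, tsum_exp_aux]
  simp

lemma szKernel_tsum_fst (a : ℝ) (ha : 0 < a) (m : ℕ) (x : ℝ) :
    ∑' k : ℕ, szKernel a m x k * ((k : ℝ) / m) =
      x * Real.log a / (m * (a ^ ((m : ℝ)⁻¹) - 1)) := by
  set c := a ^ ((m : ℝ)⁻¹) - 1 with hc
  set w := x * Real.log a / c with hw
  have h1 : ∀ k : ℕ, szKernel a m x k * ((k : ℝ) / m) =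
      (a ^ (-x / c) / m) * ((k : ℝ) * w ^ k / (k.factorial : ℝ)) := by
    intro k
    rw [szKernel_eq]
    ring
  rw [tsum_congr h1, tsum_mul_left, tsum_k_pow]
  have hA : a ^ (-x / c) * Real.exp w = 1 := by
    rw [Real.rpow_def_of_pos ha, ← Real.exp_add, hw,
      show Real.log a * (-x / c) + x * Real.log a / c = 0 by ring, Real.exp_zero]
  have : a ^ (-x / c) / (m : ℝ) * (w * Real.exp w)
      = (a ^ (-x / c) * Real.exp w) * w / m := by ring
  rw [this, hA, one_mul, hw]
  rw [div_div, mul_comm c (m : ℝ)]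

theorem stmt_1 (a : ℝ) (ha : 1 < a) (m n : ℕ) (hm : 0 < m) (hn : 0 < n)
    (x y : ℝ) (hx : 0 ≤ x) (hy : 0 ≤ y) :
    szBiv a m n (fun t _ => t) x y =
      x * Real.log a / (m * (a ^ ((m : ℝ)⁻¹) - 1)) := by
  have ha0 : (0 : ℝ) < a := lt_trans zero_lt_one ha
  unfold szBiv
  have hinner : ∀ k₁ : ℕ,
      (∑' k₂ : ℕ, szKernel a m x k₁ * szKernel a n y k₂ * ((k₁ : ℝ) / m))
        = szKernel a m x k₁ * ((k₁ : ℝ) / m) := by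
    intro k₁
    have : ∀ k₂ : ℕ, szKernel a m x k₁ * szKernel a n y k₂ * ((k₁ : ℝ) / m)
        = (szKernel a m x k₁ * ((k₁ : ℝ) / m)) * szKernel a n y k₂ := by
      intro k₂; ring
    rw [tsum_congr this, tsum_mul_left, szKernel_tsum a ha0 n y, mul_one]
  rw [tsum_congr hinner]
  exact szKernel_tsum_fst a ha0 m x
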